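/- arXiv:1511.02913 — 3 statements merged into one kernel-verified Lean document; each statement's English description precedes it below -/
import Mathlib

section
/- Let G be a strongly connected digraph, s a start vertex, and e=(u,v) a strong bridge that is a bridge of G_s. If w is a vertex with w ∈ D(v) and h(w) ∉ D(v) (the parent of w in the loop nesting tree H lies outside D(v)), then the set H(w) of descendants of w in H induces a strongly connected component of G\e. -/
namespace StrongConn

variable {V : Type*}

/-- `p` is a walk in the digraph `G` from `u` to `v`, recorded as the list of visited vertices. -/
def IsWalk (G : V → V → Prop) (u v : V) (p : List V) : Prop :=
  p.Chain' G ∧ p.head? = some u ∧ p.getLast? = some v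

/-- The directed edge `(a,b)` occurs on the walk `p`. -/
def EdgeOn (a b : V) (p : List V) : Prop := (a, b) ∈ p.zip p.tail

/-- `v` is reachable from `u` in `G`. -/
def Reach (G : V → V → Prop) (u v : V) : Prop := ∃ p, IsWalk G u v p

/-- `u` and `v` are strongly connected in `G`. -/
def SConn (G : V → V → Prop) (u v : V) : Prop := Reach G u v ∧ Reach G v u

def StronglyConnected (G : V → V → Prop) : Prop := ∀ u v, Reach G u v

/-- `G` with the edge `(a,b)` deleted. -/
def DelEdge (G : V → V → Prop) (a b : V) : V → V → Prop :=
  fun x y => G x y ∧ ¬(x = a ∧ y = b)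

/-- `G` with the vertex `u` (and all incident edges) deleted. -/
def DelVertex (G : V → V → Prop) (u : V) : V → V → Prop :=
  fun x y => G x y ∧ x ≠ u ∧ y ≠ u

/-- `C` is a strongly connected component of `G`. -/
def IsSCC (G : V → V → Prop) (C : Set V) : Prop :=
  C.Nonempty ∧ (∀ x ∈ C, ∀ y ∈ C, SConn G x y) ∧ ∀ x ∈ C, ∀ y, SConn G x y → y ∈ C

/-- `(a,b)` is a strong bridge: an edge whose removal increases the number of
strongly connected components, i.e. it separates some strongly connected pair. -/
def IsStrongBridge (G : V → V → Prop) (a b : V) : Prop :=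
  G a b ∧ ∃ x y, SConn G x y ∧ ¬ SConn (DelEdge G a b) x y

/-- `u` is a strong articulation point: removing it increases the number of strongly
connected components, i.e. it separates some strongly connected pair of other vertices. -/
def IsStrongArticulationPoint (G : V → V → Prop) (u : V) : Prop :=
  ∃ x y, x ≠ u ∧ y ≠ u ∧ SConn G x y ∧ ¬ SConn (DelVertex G u) x y

/-- The reverse digraph. -/
def Rev (G : V → V → Prop) : V → V → Prop := fun x y => G y x

/-- `u` dominates `v` in the flow graph `G_s`; equivalently, `u` is an ancestor of `v`
(and `v` a descendant of `u`) in the dominator tree of `G_s`. -/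
def Dom (G : V → V → Prop) (s u v : V) : Prop :=
  ∀ p, IsWalk G s v p → u ∈ p

/-- `u` is the immediate dominator of `v` in `G_s` (the parent of `v` in the dominator tree). -/
def Idom (G : V → V → Prop) (s u v : V) : Prop :=
  u ≠ v ∧ Dom G s u v ∧ ∀ w, w ≠ v → Dom G s w v → Dom G s w u

/-- Edge `(a,b)` is a bridge of the flow graph `G_s`: every walk from `s` to `b` uses it. -/
def IsBridge (G : V → V → Prop) (s a b : V) : Prop :=
  G a b ∧ ∀ p, IsWalk G s b p → EdgeOn a b p

/-- `r` is the head of some bridge of `G_s`, i.e. a non-`s` root in the bridge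
decomposition of the dominator tree. -/
def IsBridgeHead (G : V → V → Prop) (s r : V) : Prop :=
  ∃ a, IsBridge G s a r

/-- `r` is the root of the tree containing `x` in the bridge decomposition of the
dominator tree of `G_s`: `r` dominates `x`, `r` is `s` or a bridge head, and every
bridge head dominating `x` dominates `r`. -/
def IsBDRoot (G : V → V → Prop) (s r x : V) : Prop :=
  Dom G s r x ∧ (r = s ∨ IsBridgeHead G s r) ∧
    ∀ z, Dom G s z x → IsBridgeHead G s z → Dom G s z r

/-- A depth-first search tree of `G` rooted at `s`, given by a parent function and a
preorder numbering. -/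
structure DFSTree (G : V → V → Prop) (s : V) where
  parent : V → V
  pre : V → ℕ
  parent_root : parent s = s
  parent_edge : ∀ v, v ≠ s → G (parent v) v
  root_reach : ∀ v, ∃ n, parent^[n] v = s
  pre_inj : Function.Injective pre
  pre_parent : ∀ v, v ≠ s → pre (parent v) < pre v
  /-- Descendants of a vertex form a contiguous interval in preorder. -/
  interval : ∀ u v w, (∃ n, parent^[n] w = u) → pre u ≤ pre v → pre v ≤ pre w →
      ∃ n, parent^[n] v = u
  /-- The defining property of depth-first search trees: every edge going forward
  in preorder goes to a descendant. -/
  dfs_edge : ∀ u v, G u v → pre u < pre v → ∃ n, parent^[n] v = u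

/-- `u` is an ancestor of `v` in the tree `T` (every vertex is an ancestor of itself). -/
def DFSTree.Anc {G : V → V → Prop} {s : V} (T : DFSTree G s) (u v : V) : Prop :=
  ∃ n, T.parent^[n] v = u

/-- `x ∈ loop(u)` with respect to the tree-ancestor relation `tanc`: `x` is a descendant
of `u` and there is a walk from `x` to `u` using only descendants of `u`. -/
def InLoop (G : V → V → Prop) (tanc : V → V → Prop) (u x : V) : Prop :=
  tanc u x ∧ ∃ p, IsWalk G x u p ∧ ∀ y ∈ p, tanc u y

/-- `hp` is the parent function of the loop nesting tree of `G_s` with respect to the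
DFS-tree ancestor relation `tanc`: `hp x` is the nearest proper ancestor `u` of `x`
in the DFS tree with `x ∈ loop(u)`. -/
def IsLoopParent (G : V → V → Prop) (s : V) (tanc : V → V → Prop) (hp : V → V) : Prop :=
  hp s = s ∧ ∀ x, x ≠ s →
    (tanc (hp x) x ∧ hp x ≠ x ∧ InLoop G tanc (hp x) x ∧
      ∀ u, tanc u x → u ≠ x → InLoop G tanc u x → tanc u (hp x))

/-- `u` is an ancestor of `v` in the loop nesting tree with parent function `hp`. -/
def HAnc (hp : V → V) (u v : V) : Prop := ∃ n, hp^[n] v = u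

/-- `w` is the nearest common ancestor of `x` and `y` in the loop nesting tree
with parent function `hp`. -/
def HNca (hp : V → V) (x y w : V) : Prop :=
  HAnc hp w x ∧ HAnc hp w y ∧ ∀ z, HAnc hp z x → HAnc hp z y → HAnc hp z w

/-- `u` is a nontrivial dominator of `G_s`: `u ≠ s` and `u` is not a leaf of the
dominator tree (it properly dominates some vertex). -/
def NontrivialDom (G : V → V → Prop) (s u : V) : Prop :=
  u ≠ s ∧ ∃ w, w ≠ u ∧ Dom G s u w

/-- `a` and `b` are siblings in the dominator tree of `G_s`. -/
def SiblingInD (G : V → V → Prop) (s a b : V) : Prop :=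
  a ≠ b ∧ ∃ w, Idom G s w a ∧ Idom G s w b

/-- Given the bridge-decomposition root function `r` and loop-nesting parent `hp`,
`z` is a boundary vertex. -/
def Boundary (s : V) (r hp : V → V) (z : V) : Prop := z = s ∨ r (hp z) ≠ r z

/-- `z` is the nearest boundary ancestor of `x` in the loop nesting tree. -/
def IsNearestBoundary (s : V) (r hp : V → V) (x z : V) : Prop :=
  HAnc hp z x ∧ Boundary s r hp z ∧
    ∀ z', HAnc hp z' x → Boundary s r hp z' → HAnc hp z' z

/-- `x` and `y` are 2-edge-connected: no single edge deletion leaves them in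
different strongly connected components. -/
def TwoEdgeConnected (G : V → V → Prop) (x y : V) : Prop :=
  ∀ a b, G a b → SConn (DelEdge G a b) x y


open Relation List

variable {R G : V → V → Prop} {a b v x y z : V}

lemma mem_of_getLast?' : ∀ {l : List V}, l.getLast? = some a → a ∈ l
  | [c], h => by simp_all
  | c :: d :: t, h => by
      rw [List.getLast?_cons_cons] at h
      exact List.mem_cons_of_mem _ (mem_of_getLast?' h)

lemma mem_zip_tail : ∀ {l : List V}, (a, b) ∈ l.zip l.tail → a ∈ l ∧ b ∈ l
  | c :: d :: t, h => by
      rcases List.mem_cons.1 h with h | h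
      · obtain ⟨rfl, rfl⟩ : c = a ∧ d = b := by simpa using h.symm
        simp
      · have := mem_zip_tail (l := d :: t) h
        exact ⟨List.mem_cons_of_mem _ this.1, List.mem_cons_of_mem _ this.2⟩
  | [c], h => by simp at h

lemma chain'_iff_zip : ∀ {l : List V}, l.Chain' R ↔ ∀ a b, (a, b) ∈ l.zip l.tail → R a b
  | [] => by simp [List.Chain']
  | [c] => by simp [List.Chain']
  | c :: d :: t => by
      rw [List.Chain', List.isChain_cons_cons, ← List.Chain', chain'_iff_zip (l := d :: t)]
      constructor
      · rintro ⟨h1, h2⟩ a b hab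
        rcases List.mem_cons.1 hab with hab | hab
        · obtain ⟨rfl, rfl⟩ : c = a ∧ d = b := by simpa using hab.symm
          exact h1
        · exact h2 a b hab
      · intro h
        exact ⟨h c d (List.mem_cons_self), fun a b hab => h a b (List.mem_cons_of_mem _ hab)⟩

lemma fst_mem_dropLast : ∀ {l : List V}, (a, b) ∈ l.zip l.tail → a ∈ l.dropLast
  | c :: d :: t, h => by
      rcases List.mem_cons.1 h with h | h
      · obtain ⟨rfl, rfl⟩ : c = a ∧ d = b := by simpa using h.symm
        simp [List.dropLast_cons_of_ne_nil]
      · have := fst_mem_dropLast (l := d :: t) h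
        rw [List.dropLast_cons_of_ne_nil (by simp)]
        exact List.mem_cons_of_mem _ this
  | [c], h => by simp at h

lemma head_or_edge : ∀ (l : List V) (x : V), y ∈ l → l.head? = some x →
    y = x ∨ ∃ z, (z, y) ∈ l.zip l.tail := by
  intro l
  induction l with
  | nil => intro x hy; simp at hy
  | cons c t ih =>
    intro x hy hx
    obtain rfl : c = x := by simpa using hx
    rcases List.mem_cons.1 hy with rfl | hy
    · exact Or.inl rfl
    · cases t with
      | nil => simp at hy
      | cons d t' =>
        rcases ih d hy (rfl : (d :: t').head? = some d) with rfl | ⟨z, hz⟩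
        · exact Or.inr ⟨c, List.mem_cons_self⟩
        · exact Or.inr ⟨z, List.mem_cons_of_mem _ hz⟩

lemma rtg_of_walk : ∀ (p : List V) (a : V), p.Chain' R → p.head? = some a → p.getLast? = some b →
    ReflTransGen R a b := by
  intro p
  induction p with
  | nil => intro a _ ha; simp at ha
  | cons c t ih =>
    intro a hc ha hb
    obtain rfl : c = a := by simpa using ha
    cases t with
    | nil =>
      obtain rfl : c = b := by simpa using hb
      exact .refl
    | cons d t' =>
      rw [List.Chain', List.isChain_cons_cons] at hc
      rw [List.getLast?_cons_cons] at hb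
      exact ReflTransGen.head hc.1 (ih d hc.2 rfl hb)

lemma walk_of_rtg (h : ReflTransGen R a b) : ∃ p, IsWalk R a b p := by
  induction h using Relation.ReflTransGen.head_induction_on with
  | refl => exact ⟨[b], List.isChain_singleton _, rfl, rfl⟩
  | head h1 h2 ih =>
      obtain ⟨p, hc, hh, hl⟩ := ih
      cases p with
      | nil => simp at hh
      | cons c t =>
        obtain rfl : c = _ := by simpa using hh
        exact ⟨_ :: c :: t, List.isChain_cons_cons.2 ⟨h1, hc⟩, rfl, by rwa [List.getLast?_cons_cons]⟩

lemma reach_rtg : (∃ p, IsWalk R a b p) ↔ ReflTransGen R a b :=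
  ⟨fun ⟨_, hc, hh, hl⟩ => rtg_of_walk _ _ hc hh hl, walk_of_rtg⟩

lemma rtg_of_walkP {P : V → Prop} {p : List V} (h : IsWalk G a b p) (hP : ∀ z ∈ p, P z) :
    ReflTransGen (fun x y => G x y ∧ P x ∧ P y) a b := by
  refine rtg_of_walk _ _ ?_ h.2.1 h.2.2
  rw [chain'_iff_zip]
  intro c d hcd
  have hm := mem_zip_tail hcd
  exact ⟨chain'_iff_zip.1 h.1 c d hcd, hP c hm.1, hP d hm.2⟩

lemma walkP_of_rtg {P : V → Prop} (h : ReflTransGen (fun x y => G x y ∧ P x ∧ P y) a b)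
    (hPa : P a) : ∃ p, IsWalk G a b p ∧ ∀ z ∈ p, P z := by
  obtain ⟨p, hc, hh, hl⟩ := walk_of_rtg h
  refine ⟨p, ⟨hc.imp fun _ _ h => h.1, hh, hl⟩, ?_⟩
  intro z hz
  rcases head_or_edge p a hz hh with rfl | ⟨c, hc'⟩
  · exact hPa
  · exact (chain'_iff_zip.1 hc c z hc').2.2

lemma walk_prefix : ∀ (p : List V) (a : V), p.Chain' R → p.head? = some a → v ∈ p →
    ∃ q : List V, q.Chain' R ∧ q.head? = some a ∧ q.getLast? = some v ∧ ∀ z ∈ q.dropLast, z ≠ v := by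
  intro p
  induction p with
  | nil => intro a _ ha; simp at ha
  | cons c t ih =>
    intro a hc ha hv
    obtain rfl : c = a := by simpa using ha
    by_cases hva : v = c
    · exact ⟨[v], List.isChain_singleton _, by simp [hva], rfl, by simp⟩
    · have hvt : v ∈ t := by
        rcases List.mem_cons.1 hv with rfl | h
        · exact absurd rfl hva
        · exact h
      cases t with
      | nil => simp at hvt
      | cons d t' =>
        rw [List.Chain', List.isChain_cons_cons] at hc
        obtain ⟨q, hq1, hq2, hq3, hq4⟩ := ih d hc.2 (rfl : (d :: t').head? = some d) hvt
        cases q with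
        | nil => simp at hq2
        | cons e q' =>
          obtain rfl : e = d := by simpa using hq2
          refine ⟨c :: e :: q', List.isChain_cons_cons.2 ⟨hc.1, hq1⟩, rfl,
            by rwa [List.getLast?_cons_cons], ?_⟩
          rw [List.dropLast_cons_of_ne_nil (by simp)]
          intro z hz
          rcases List.mem_cons.1 hz with rfl | hz
          · exact fun h => hva h.symm
          · exact hq4 z hz


section Tree

variable {G : V → V → Prop} {s : V} (T : DFSTree G s)

lemma anc_refl : T.Anc a a := ⟨0, rfl⟩

lemma anc_trans (h1 : T.Anc a b) (h2 : T.Anc b c) : T.Anc a c := by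
  obtain ⟨n, hn⟩ := h1; obtain ⟨k, hk⟩ := h2
  exact ⟨n + k, by rw [Function.iterate_add_apply, hk, hn]⟩

lemma anc_root : T.Anc s x := T.root_reach x

lemma anc_parent (b : V) : T.Anc (T.parent b) b := ⟨1, rfl⟩

lemma pre_iter_le : ∀ (n : ℕ) (b : V), T.pre (T.parent^[n] b) ≤ T.pre b := by
  intro n
  induction n with
  | zero => intro b; simp
  | succ n ih =>
    intro b
    by_cases hb : b = s
    · subst hb; rw [Function.iterate_fixed T.parent_root]
    · rw [Function.iterate_succ_apply]
      exact le_trans (ih (T.parent b)) (le_of_lt (T.pre_parent b hb))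

lemma anc_pre_le (h : T.Anc a b) : T.pre a ≤ T.pre b := by
  obtain ⟨n, hn⟩ := h; rw [← hn]; exact pre_iter_le T n b

lemma anc_pre_lt (h : T.Anc a b) (hne : a ≠ b) : T.pre a < T.pre b := by
  obtain ⟨n, hn⟩ := h
  cases n with
  | zero => exact absurd (by simpa using hn.symm) hne
  | succ n =>
    by_cases hb : b = s
    · subst hb; rw [Function.iterate_fixed T.parent_root] at hn; exact absurd hn.symm hne
    · rw [Function.iterate_succ_apply] at hn
      rw [← hn]
      exact lt_of_le_of_lt (pre_iter_le T n (T.parent b)) (T.pre_parent b hb)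

lemma anc_antisymm (h1 : T.Anc a b) (h2 : T.Anc b a) : a = b := by
  by_contra hne
  exact absurd (anc_pre_lt T h2 (Ne.symm hne)) (not_lt.2 (le_of_lt (anc_pre_lt T h1 hne)))

/-- The tree path from `a` down to `b`, as reachability with all vertices between
`a` and `b` in the ancestor order. -/
lemma tree_rtg : ∀ (n : ℕ) (b : V), T.parent^[n] b = a →
    Relation.ReflTransGen
      (fun x y => G x y ∧ (T.Anc a x ∧ T.Anc x b) ∧ (T.Anc a y ∧ T.Anc y b)) a b := by
  intro n
  induction n with
  | zero => intro b hb; subst hb; exact .refl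
  | succ n ih =>
    intro b hb
    by_cases hbs : b = s
    · subst hbs
      rw [Function.iterate_fixed T.parent_root] at hb
      subst hb; exact .refl
    · rw [Function.iterate_succ_apply] at hb
      have step : G (T.parent b) b := T.parent_edge b hbs
      have h1 : T.Anc a (T.parent b) := ⟨n, hb⟩
      have h2 : Relation.ReflTransGen
          (fun x y => G x y ∧ (T.Anc a x ∧ T.Anc x b) ∧ (T.Anc a y ∧ T.Anc y b))
          a (T.parent b) :=
        Relation.ReflTransGen.mono
          (fun x y h => ⟨h.1, ⟨h.2.1.1, anc_trans T h.2.1.2 (anc_parent T b)⟩,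
            ⟨h.2.2.1, anc_trans T h.2.2.2 (anc_parent T b)⟩⟩) _ _ (ih (T.parent b) hb)
      exact h2.tail ⟨step, ⟨h1, anc_parent T b⟩, ⟨⟨n + 1, hb⟩, anc_refl T⟩⟩

end Tree


section Loop

variable {G : V → V → Prop} {s : V} {T : DFSTree G s} {hp : V → V}
variable {m w : V}

lemma hanc_trans (h1 : HAnc hp a b) (h2 : HAnc hp b c) : HAnc hp a c := by
  obtain ⟨n, hn⟩ := h1; obtain ⟨k, hk⟩ := h2
  exact ⟨n + k, by rw [Function.iterate_add_apply, hk, hn]⟩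

lemma hanc_tanc (hlp : IsLoopParent G s T.Anc hp) : ∀ (n : ℕ) (x : V), hp^[n] x = w →
    T.Anc w x := by
  intro n
  induction n with
  | zero => intro x hx; subst hx; exact anc_refl T
  | succ n ih =>
    intro x hx
    by_cases hxs : x = s
    · subst hxs
      rw [Function.iterate_fixed hlp.1] at hx
      subst hx; exact anc_root T
    · rw [Function.iterate_succ_apply] at hx
      exact anc_trans T (ih (hp x) hx) (hlp.2 x hxs).1

lemma hanc_tanc' (hlp : IsLoopParent G s T.Anc hp) (h : HAnc hp w x) : T.Anc w x := by
  obtain ⟨n, hn⟩ := h; exact hanc_tanc hlp n x hn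

/-- Every `H`-descendant of `w` reaches `w` through DFS-descendants of `w`. -/
lemma hanc_rtg (hlp : IsLoopParent G s T.Anc hp) : ∀ (n : ℕ) (x : V), hp^[n] x = w →
    Relation.ReflTransGen (fun a b => G a b ∧ T.Anc w a ∧ T.Anc w b) x w := by
  intro n
  induction n with
  | zero => intro x hx; subst hx; exact .refl
  | succ n ih =>
    intro x hx
    by_cases hxw : x = w
    · subst hxw; exact .refl
    · have hxs : x ≠ s := by
        rintro rfl
        rw [Function.iterate_fixed hlp.1] at hx
        exact hxw hx
      obtain ⟨h1, h2, h3, h4⟩ := hlp.2 x hxs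
      rw [Function.iterate_succ_apply] at hx
      have hwx : T.Anc w (hp x) := hanc_tanc hlp n (hp x) hx
      obtain ⟨hax, p, hpw, hprop⟩ := h3
      have step : Relation.ReflTransGen (fun a b => G a b ∧ T.Anc w a ∧ T.Anc w b) x (hp x) := by
        refine Relation.ReflTransGen.mono ?_ _ _
          (rtg_of_walkP (P := fun z => T.Anc (hp x) z) hpw hprop)
        exact fun a b h => ⟨h.1, anc_trans T hwx h.2.1, anc_trans T hwx h.2.2⟩
      exact step.trans (ih (hp x) hx)

/-- Conversely: a DFS-descendant of `m` that reaches `m` through DFS-descendants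
of `m` is an `H`-descendant of `m`. -/
lemma loop_hanc (hlp : IsLoopParent G s T.Anc hp) : ∀ (N : ℕ) (z : V), T.pre z < N →
    T.Anc m z →
    Relation.ReflTransGen (fun a b => G a b ∧ T.Anc m a ∧ T.Anc m b) z m →
    HAnc hp m z := by
  intro N
  induction N with
  | zero => intro z hz; exact absurd hz (Nat.not_lt_zero _)
  | succ N ih =>
    intro z hz hmz hrtg
    by_cases hzm : z = m
    · exact hzm ▸ ⟨0, rfl⟩
    · have hzs : z ≠ s := by
        rintro rfl
        obtain ⟨n, hn⟩ := hmz
        rw [Function.iterate_fixed T.parent_root] at hn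
        exact hzm hn
      obtain ⟨h1, h2, h3, h4⟩ := hlp.2 z hzs
      have hloop : InLoop G T.Anc m z := by
        refine ⟨hmz, ?_⟩
        obtain ⟨p, hw, hP⟩ := walkP_of_rtg (P := fun y => T.Anc m y) hrtg hmz
        exact ⟨p, hw, hP⟩
      have hmhp : T.Anc m (hp z) := h4 m hmz (Ne.symm hzm) hloop
      -- reach from hp z to m inside descendants of m
      obtain ⟨n, hn⟩ := id h1
      have htree : Relation.ReflTransGen (fun a b => G a b ∧ T.Anc m a ∧ T.Anc m b)
          (hp z) z := by
        refine Relation.ReflTransGen.mono ?_ _ _ (tree_rtg T n z hn)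
        exact fun a b h => ⟨h.1, anc_trans T hmhp h.2.1.1, anc_trans T hmhp h.2.2.1⟩
      have hpre : T.pre (hp z) < N := by
        have := anc_pre_lt T h1 h2
        omega
      obtain ⟨k, hk⟩ := ih (hp z) hpre hmhp (htree.trans hrtg)
      exact ⟨k + 1, by rw [Function.iterate_succ_apply, hk]⟩

end Loop


section Main

variable {G : V → V → Prop} {s u v q z : V}

lemma dom_walk_anc (T : DFSTree G s) (q : V) :
    ∃ p, IsWalk G s q p ∧ ∀ z ∈ p, T.Anc z q := by
  obtain ⟨n, hn⟩ := T.root_reach q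
  have h : Relation.ReflTransGen (fun x y => G x y ∧ T.Anc x q ∧ T.Anc y q) s q :=
    Relation.ReflTransGen.mono (fun x y h => ⟨h.1, h.2.1.2, h.2.2.2⟩) _ _ (tree_rtg T n q hn)
  exact walkP_of_rtg h (anc_root T)

lemma dom_anc (T : DFSTree G s) (hq : Dom G s v q) : T.Anc v q := by
  obtain ⟨p, hw, hP⟩ := dom_walk_anc T q
  exact hP v (hq p hw)

lemma bridge_u_anc (T : DFSTree G s) (hbr : IsBridge G s u v) : T.Anc u v := by
  obtain ⟨p, hw, hP⟩ := dom_walk_anc T v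
  exact hP u (mem_zip_tail (hbr.2 p hw)).1

lemma u_ne_v (hG : StronglyConnected G) (hbr : IsBridge G s u v) : u ≠ v := by
  obtain ⟨p, hc, hh, hl⟩ := hG s v
  obtain ⟨q, hq1, hq2, hq3, hq4⟩ := walk_prefix p s hc hh (mem_of_getLast?' hl)
  exact hq4 u (fst_mem_dropLast (hbr.2 q ⟨hq1, hq2, hq3⟩))

lemma dom_not_reach (hbr : IsBridge G s u v) (hz : Dom G s v z) :
    ¬ Relation.ReflTransGen (DelEdge G u v) s z := by
  intro hr
  obtain ⟨p, hc, hh, hl⟩ := walk_of_rtg hr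
  have hcG : p.Chain' G := hc.imp fun _ _ h => h.1
  have hv : v ∈ p := hz p ⟨hcG, hh, hl⟩
  obtain ⟨q', hq1, hq2, hq3, _⟩ := walk_prefix p s hc hh hv
  have he : EdgeOn u v q' := hbr.2 q' ⟨hq1.imp (fun _ _ h => h.1), hq2, hq3⟩
  exact (chain'_iff_zip.1 hq1 u v he).2 ⟨rfl, rfl⟩

lemma dom_of_not_reach (h : ¬ Relation.ReflTransGen (DelEdge G u v) s z) : Dom G s v z := by
  intro p hw
  by_contra hv
  refine h (rtg_of_walk p s ?_ hw.2.1 hw.2.2)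
  rw [chain'_iff_zip]
  intro a b hab
  refine ⟨chain'_iff_zip.1 hw.1 a b hab, ?_⟩
  rintro ⟨rfl, rfl⟩
  exact hv (mem_zip_tail hab).2

lemma gres_del {T : DFSTree G s} (hG : StronglyConnected G) (hbr : IsBridge G s u v)
    (hq : Dom G s v q) : ∀ a b, (G a b ∧ T.Anc q a ∧ T.Anc q b) → DelEdge G u v a b := by
  rintro a b ⟨hab, ha, hb⟩
  refine ⟨hab, ?_⟩
  rintro ⟨ha', hb'⟩
  rw [ha'] at ha
  rw [hb'] at hb
  have hqv : q = v := anc_antisymm T hb (dom_anc T hq)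
  rw [hqv] at ha
  exact u_ne_v hG hbr (anc_antisymm T (bridge_u_anc T hbr) ha)

lemma hdesc_dom {T : DFSTree G s} {hp : V → V} (hG : StronglyConnected G)
    (hbr : IsBridge G s u v) (hlp : IsLoopParent G s T.Anc hp)
    (hq : Dom G s v q) (hz : HAnc hp q z) : Dom G s v z := by
  apply dom_of_not_reach
  intro hr
  obtain ⟨n, hn⟩ := hz
  have h1 : Relation.ReflTransGen (DelEdge G u v) z q :=
    Relation.ReflTransGen.mono (gres_del hG hbr hq) _ _ (hanc_rtg hlp n z hn)
  exact dom_not_reach hbr hq (hr.trans h1)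

end Main

/-- If `w ∈ D(v)` and `h(w) ∉ D(v)`, then `H(w)` induces a strongly connected
component of `G \ (u,v)`. -/
theorem stmt5 (G : V → V → Prop) (hG : StronglyConnected G) (s u v : V)
    (hsb : IsStrongBridge G u v) (hbr : IsBridge G s u v)
    (T : DFSTree G s) (hp : V → V) (hlp : IsLoopParent G s T.Anc hp)
    (w : V) (hw : Dom G s v w) (hw2 : ¬ Dom G s v (hp w)) :
    IsSCC (DelEdge G u v) {x | HAnc hp w x} := by
  classical
  have key : ∀ x, HAnc hp w x →
      Relation.ReflTransGen (DelEdge G u v) x w ∧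
        Relation.ReflTransGen (DelEdge G u v) w x := by
    intro x hx
    obtain ⟨n, hn⟩ := hx
    constructor
    · exact Relation.ReflTransGen.mono (gres_del hG hbr hw) _ _ (hanc_rtg hlp n x hn)
    · obtain ⟨k, hk⟩ := hanc_tanc hlp n x hn
      refine Relation.ReflTransGen.mono ?_ _ _ (tree_rtg T k x hk)
      exact fun a b h => gres_del hG hbr hw a b ⟨h.1, h.2.1.1, h.2.2.1⟩
  refine ⟨⟨w, ⟨0, rfl⟩⟩, ?_, ?_⟩
  · intro x hx y hy
    obtain ⟨hx1, hx2⟩ := key x hx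
    obtain ⟨hy1, hy2⟩ := key y hy
    exact ⟨reach_rtg.2 (hx1.trans hy2), reach_rtg.2 (hy1.trans hx2)⟩
  · rintro x hx y ⟨hxy, hyx⟩
    have hx' : HAnc hp w x := hx
    have hxy' : Relation.ReflTransGen (DelEdge G u v) x y := reach_rtg.1 hxy
    have hyx' : Relation.ReflTransGen (DelEdge G u v) y x := reach_rtg.1 hyx
    set S : V → Prop := fun z => Relation.ReflTransGen (DelEdge G u v) x z ∧
      Relation.ReflTransGen (DelEdge G u v) z x with hS
    have hSx : S x := ⟨.refl, .refl⟩
    have hSy : S y := ⟨hxy', hyx'⟩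
    have hne : (T.pre '' {z | S z}).Nonempty := ⟨T.pre x, x, hSx, rfl⟩
    obtain ⟨m, hmS, hmpre⟩ : ∃ m, S m ∧ ∀ z, S z → T.pre m ≤ T.pre z := by
      have hmem := Nat.sInf_mem hne
      obtain ⟨m, hm, hk⟩ := hmem
      exact ⟨m, hm, fun z hz => by rw [hk]; exact Nat.sInf_le ⟨z, hz, rfl⟩⟩
    have claim1 : ∀ z, Relation.ReflTransGen (DelEdge G u v) m z →
        Relation.ReflTransGen (DelEdge G u v) z m → T.Anc m z := by
      intro z hz
      induction hz with
      | refl => intro _; exact anc_refl T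
      | @tail b c h1 h2 ih =>
        intro hcm
        have hbm : Relation.ReflTransGen (DelEdge G u v) b m :=
          (Relation.ReflTransGen.single h2).trans hcm
        have hmb : T.Anc m b := ih hbm
        have hSc : S c := ⟨hmS.1.trans (h1.trans (.single h2)), hcm.trans hmS.2⟩
        have hpre : T.pre m ≤ T.pre c := hmpre c hSc
        rcases lt_or_ge (T.pre b) (T.pre c) with hlt | hge
        · exact anc_trans T hmb (T.dfs_edge b c h2.1 hlt)
        · exact T.interval m c b hmb hpre hge
    have claim2 : ∀ z, Relation.ReflTransGen (DelEdge G u v) z m →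
        Relation.ReflTransGen (DelEdge G u v) x z →
        Relation.ReflTransGen (fun a b => G a b ∧ T.Anc m a ∧ T.Anc m b) z m := by
      intro z hzm
      induction hzm using Relation.ReflTransGen.head_induction_on with
      | refl => intro _; exact .refl
      | @head a c h1 h2 ih =>
        intro hxa
        have hxc : Relation.ReflTransGen (DelEdge G u v) x c := hxa.trans (.single h1)
        have hma : T.Anc m a :=
          claim1 a (hmS.2.trans hxa) ((Relation.ReflTransGen.single h1).trans h2)
        have hmc : T.Anc m c := claim1 c (hmS.2.trans hxc) h2
        exact Relation.ReflTransGen.head ⟨h1.1, hma, hmc⟩ (ih hxc)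
    have hvx : Dom G s v x := hdesc_dom hG hbr hlp hw hx'
    have hvm : Dom G s v m := by
      apply dom_of_not_reach
      intro h
      exact dom_not_reach hbr hvx (h.trans hmS.2)
    have hmy : HAnc hp m y := loop_hanc hlp (T.pre y + 1) y (Nat.lt_succ_self _)
        (claim1 y (hmS.2.trans hxy') (hyx'.trans hmS.1))
        (claim2 y (hyx'.trans hmS.1) hxy')
    have hmx : HAnc hp m x := loop_hanc hlp (T.pre x + 1) x (Nat.lt_succ_self _)
        (claim1 x hmS.2 hmS.1) (claim2 x hmS.1 .refl)
    by_cases hwm : HAnc hp w m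
    · exact hanc_trans hwm hmy
    · exfalso
      obtain ⟨i, hi⟩ := hx'
      obtain ⟨j, hj⟩ := hmx
      rcases le_total j i with hji | hij
      · refine hwm ⟨i - j, ?_⟩
        rw [← hj, ← Function.iterate_add_apply, Nat.sub_add_cancel hji]
        exact hi
      · have hk : hp^[j - i] w = m := by
          rw [← hi, ← Function.iterate_add_apply, Nat.sub_add_cancel hij]
          exact hj
        rcases Nat.eq_zero_or_pos (j - i) with h0 | hpos
        · rw [h0] at hk
          exact hwm (hk ▸ ⟨0, rfl⟩)
        · obtain ⟨k, hk'⟩ := Nat.exists_eq_succ_of_ne_zero (Nat.pos_iff_ne_zero.1 hpos)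
          rw [hk', Function.iterate_succ_apply] at hk
          exact hw2 (hdesc_dom hG hbr hlp hvm ⟨k, hk⟩)

end StrongConn
end

section
/- Let G be a strongly connected digraph with start vertex s, and let e=(u,v) be a strong bridge that is a bridge in the flow graph G_s but not a bridge in the reverse flow graph G_s^R (i.e., u=d(v) and v ≠ d^R(u)). Then the subgraph of G\e induced by the vertex set V \ D(v) is a strongly connected component of G\e. -/
namespace StrongConn

variable {V : Type*}

lemma walk_mono {A B : V → V → Prop} (h : ∀ x y, A x y → B x y)
    {a b : V} {p : List V} (hw : IsWalk A a b p) : IsWalk B a b p :=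
  ⟨hw.1.imp h, hw.2.1, hw.2.2⟩

lemma walk_single (G : V → V → Prop) (a : V) : IsWalk G a a [a] :=
  ⟨List.isChain_singleton a, rfl, rfl⟩

lemma walk_cons {G : V → V → Prop} {a x b : V} {p : List V}
    (h : G a x) (hw : IsWalk G x b p) : IsWalk G a b (a :: p) := by
  obtain ⟨hc, hh, hl⟩ := hw
  cases p with
  | nil => simp at hh
  | cons y t =>
    simp only [List.head?_cons, Option.some.injEq] at hh
    subst hh
    exact ⟨List.isChain_cons_cons.2 ⟨h, hc⟩, rfl, by rw [List.getLast?_cons_cons]; exact hl⟩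

lemma reach_trans_walk {G : V → V → Prop} :
    ∀ (p : List V) {a b c : V}, IsWalk G a b p → Reach G b c → Reach G a c := by
  intro p
  induction p with
  | nil => intro a b c hw _; exact absurd hw.2.1 (by simp)
  | cons x t ih =>
    intro a b c hw hr
    obtain ⟨hc, hh, hl⟩ := hw
    simp only [List.head?_cons, Option.some.injEq] at hh
    subst hh
    cases t with
    | nil =>
      simp only [List.getLast?_singleton, Option.some.injEq] at hl
      subst hl; exact hr
    | cons y t' =>
      unfold List.Chain' at hc; rw [List.isChain_cons_cons] at hc
      rw [List.getLast?_cons_cons] at hl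
      obtain ⟨q, hq⟩ := ih ⟨hc.2, rfl, hl⟩ hr
      exact ⟨x :: q, walk_cons hc.1 hq⟩

lemma Reach.trans {G : V → V → Prop} {a b c : V}
    (h1 : Reach G a b) (h2 : Reach G b c) : Reach G a c := by
  obtain ⟨p, hp⟩ := h1; exact reach_trans_walk p hp h2

lemma chain'_del {G : V → V → Prop} {x y : V} :
    ∀ {p : List V}, p.Chain' G → ¬ EdgeOn x y p → p.Chain' (DelEdge G x y) := by
  intro p
  induction p with
  | nil => intros; exact List.isChain_nil
  | cons a t ih =>
    cases t with
    | nil => intros; exact List.isChain_singleton a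
    | cons b t' =>
      intro hc he
      unfold List.Chain' at hc ⊢; rw [List.isChain_cons_cons] at hc ⊢
      simp only [EdgeOn, List.tail_cons, List.zip_cons_cons, List.mem_cons, not_or,
        Prod.mk.injEq] at he
      refine ⟨⟨hc.1, ?_⟩, ih hc.2 he.2⟩
      rintro ⟨rfl, rfl⟩; exact he.1 ⟨rfl, rfl⟩

lemma walk_del {G : V → V → Prop} {x y a b : V} {p : List V}
    (hw : IsWalk G a b p) (he : ¬ EdgeOn x y p) : IsWalk (DelEdge G x y) a b p :=
  ⟨chain'_del hw.1 he, hw.2.1, hw.2.2⟩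

lemma rel_of_edgeOn {R : V → V → Prop} {a b : V} :
    ∀ {p : List V}, p.Chain' R → EdgeOn a b p → R a b := by
  intro p
  induction p with
  | nil => intro _ he; simp [EdgeOn] at he
  | cons x t ih =>
    cases t with
    | nil => intro _ he; simp [EdgeOn] at he
    | cons y t' =>
      intro hc he
      unfold List.Chain' at hc; rw [List.isChain_cons_cons] at hc
      simp only [EdgeOn, List.tail_cons, List.zip_cons_cons, List.mem_cons,
        Prod.mk.injEq] at he
      rcases he with ⟨rfl, rfl⟩ | he
      · exact hc.1
      · exact ih hc.2 he

lemma mem_of_edgeOn {a b : V} {p : List V} (h : EdgeOn a b p) : b ∈ p :=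
  List.mem_of_mem_tail (List.of_mem_zip h).2

lemma walk_to_mem {G : V → V → Prop} {v : V} :
    ∀ {p : List V} {a b : V}, IsWalk G a b p → v ∈ p → Reach G a v := by
  intro p
  induction p with
  | nil => intro a b hw _; exact absurd hw.2.1 (by simp)
  | cons x t ih =>
    intro a b hw hv
    obtain ⟨hc, hh, hl⟩ := hw
    simp only [List.head?_cons, Option.some.injEq] at hh
    subst hh
    rcases List.mem_cons.1 hv with rfl | hv
    · exact ⟨[v], walk_single G v⟩
    cases t with
    | nil => simp at hv
    | cons y t' =>
      unfold List.Chain' at hc; rw [List.isChain_cons_cons] at hc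
      rw [List.getLast?_cons_cons] at hl
      exact Reach.trans ⟨[x, y], walk_cons hc.1 (walk_single G y)⟩
        (ih ⟨hc.2, rfl, hl⟩ hv)

lemma walk_reverse {K : V → V → Prop} {a b : V} {p : List V}
    (h : IsWalk (Rev K) a b p) : IsWalk K b a p.reverse := by
  obtain ⟨hc, hh, hl⟩ := h
  refine ⟨?_, ?_, ?_⟩
  · unfold List.Chain'; rw [List.isChain_reverse]; exact hc
  · rw [List.head?_reverse]; exact hl
  · rw [List.getLast?_reverse]; exact hh

/-- If `(u,v)` is a strong bridge that is a bridge of `G_s` but not of `G_s^R`, then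
`V \ D(v)` is a strongly connected component of `G \ (u,v)`. -/
theorem stmt6 (G : V → V → Prop) (hG : StronglyConnected G) (s u v : V)
    (hsb : IsStrongBridge G u v)
    (hbr : IsBridge G s u v) (hnbr : ¬ IsBridge (Rev G) s v u) :
    IsSCC (DelEdge G u v) {w | ¬ Dom G s v w} := by
  set G' := DelEdge G u v with hG'
  -- v ≠ s
  have hvs : v ≠ s := by
    intro h
    subst h
    have := hbr.2 [v] (walk_single G v)
    simp [EdgeOn] at this
  -- a walk from u to s in G' (from hnbr)
  have hQ : Reach G' u s := by
    rw [IsBridge, not_and_or] at hnbr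
    rcases hnbr with h | h
    · exact absurd hsb.1 h
    push_neg at h
    obtain ⟨p, hp, hne⟩ := h
    have hp' : IsWalk (DelEdge (Rev G) v u) s u p := walk_del hp hne
    have hp'' : IsWalk (Rev G') s u p := by
      refine walk_mono (fun x y hxy => ?_) hp'
      exact ⟨hxy.1, fun ⟨h1, h2⟩ => hxy.2 ⟨h2, h1⟩⟩
    exact ⟨p.reverse, walk_reverse hp''⟩
  -- every vertex reaches s in G'
  have hback : ∀ w, Reach G' w s := by
    intro w
    obtain ⟨p, hp⟩ := hG w s
    clear hbr
    induction p generalizing w with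
    | nil => exact absurd hp.2.1 (by simp)
    | cons x t ih =>
      obtain ⟨hc, hh, hl⟩ := hp
      simp only [List.head?_cons, Option.some.injEq] at hh
      subst hh
      cases t with
      | nil =>
        simp only [List.getLast?_singleton, Option.some.injEq] at hl
        subst hl; exact ⟨[x], walk_single G' x⟩
      | cons y t' =>
        unfold List.Chain' at hc; rw [List.isChain_cons_cons] at hc
        rw [List.getLast?_cons_cons] at hl
        have hy : Reach G' y s := ih y ⟨hc.2, rfl, hl⟩
        by_cases hxy : x = u ∧ y = v
        · exact hxy.1 ▸ hQ
        · exact Reach.trans ⟨[x, y], walk_cons (show G' x y from ⟨hc.1, hxy⟩)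
            (walk_single G' y)⟩ hy
  -- s reaches w in G' → w ∈ C
  have hfwd : ∀ w, Reach G' s w → ¬ Dom G s v w := by
    rintro w ⟨p, hp⟩ hdom
    have hvp : v ∈ p := hdom p (walk_mono (fun _ _ h => h.1) hp)
    obtain ⟨q, hq⟩ := walk_to_mem hp hvp
    have := hbr.2 q (walk_mono (fun _ _ h => h.1) hq)
    have huv : G' u v := rel_of_edgeOn hq.1 this
    exact huv.2 ⟨rfl, rfl⟩
  -- w ∈ C → s reaches w in G'
  have hrev : ∀ w, ¬ Dom G s v w → Reach G' s w := by
    intro w hw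
    rw [Dom] at hw
    push_neg at hw
    obtain ⟨p, hp, hvp⟩ := hw
    refine ⟨p, walk_del hp (fun he => hvp (mem_of_edgeOn he))⟩
  refine ⟨⟨s, fun (h : Dom G s v s) => ?_⟩, fun x hx y hy => ?_, fun x hx y hy => ?_⟩
  · have := h [s] (walk_single G s)
    simp only [List.mem_singleton] at this
    exact hvs this
  · exact ⟨(hback x).trans (hrev y hy), (hback y).trans (hrev x hx)⟩
  · exact hfwd y ((hrev x hx).trans hy.1)

end StrongConn
end

section
/- Let G be a strongly connected digraph with start vertex s and dominator tree D of G_s. Let x and y be vertices lying in the same tree D_r of the bridge decomposition of D, where the root r of that tree satisfies r ≠ s. If a bridge e of G_s that is not a descendant of r in D separates x and y in G, then the bridge (d(r), r) also separates x and y. -/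
namespace StrongConn

variable {V : Type*}

section Test

variable {G H : V → V → Prop} {s u v w a b : V} {p q : List V}

theorem edgeOn_cons {a b x y : V} {t : List V} :
    EdgeOn a b (x :: y :: t) ↔ (a = x ∧ b = y) ∨ EdgeOn a b (y :: t) := by
  simp [EdgeOn]

theorem edgeOn_iff {a b : V} {p : List V} :
    EdgeOn a b p ↔ ∃ l₁ l₂, p = l₁ ++ a :: b :: l₂ := by
  constructor
  · intro h
    induction p with
    | nil => simp [EdgeOn] at h
    | cons x t ih =>
      cases t with
      | nil => simp [EdgeOn] at h
      | cons y t' =>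
        rcases edgeOn_cons.mp h with ⟨rfl, rfl⟩ | h1
        · exact ⟨[], t', rfl⟩
        · obtain ⟨l₁, l₂, hl⟩ := ih h1
          exact ⟨x :: l₁, l₂, by simp [hl]⟩
  · rintro ⟨l₁, l₂, rfl⟩
    induction l₁ with
    | nil => simp [EdgeOn]
    | cons x t ih =>
      cases ht : t ++ a :: b :: l₂ with
      | nil => simp at ht
      | cons c t' =>
        rw [List.cons_append, ht]
        rw [ht] at ih
        exact edgeOn_cons.mpr (Or.inr ih)

theorem chain'_iff_edgeOn {R : V → V → Prop} {p : List V} :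
    p.Chain' R ↔ ∀ a b, EdgeOn a b p → R a b := by
  induction p with
  | nil => simp [EdgeOn, List.Chain']
  | cons x t ih =>
    cases t with
    | nil => simp [EdgeOn, List.Chain']
    | cons y t' =>
      show List.IsChain R (x :: y :: t') ↔ _
      rw [List.isChain_cons_cons]
      constructor
      · rintro ⟨hxy, h⟩ a b hab
        rcases edgeOn_cons.mp hab with ⟨rfl, rfl⟩ | h1
        · exact hxy
        · exact (ih.mp h) a b h1
      · intro h
        exact ⟨h x y (edgeOn_cons.mpr (Or.inl ⟨rfl, rfl⟩)),
          ih.mpr fun a b hab => h a b (edgeOn_cons.mpr (Or.inr hab))⟩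

theorem EdgeOn.mem_fst (h : EdgeOn a b p) : a ∈ p := by
  obtain ⟨l₁, l₂, rfl⟩ := edgeOn_iff.mp h; simp

theorem EdgeOn.mem_snd (h : EdgeOn a b p) : b ∈ p := by
  obtain ⟨l₁, l₂, rfl⟩ := edgeOn_iff.mp h; simp

theorem EdgeOn.fst_mem_dropLast (h : EdgeOn a b p) : a ∈ p.dropLast := by
  obtain ⟨l₁, l₂, rfl⟩ := edgeOn_iff.mp h
  rw [show l₁ ++ a :: b :: l₂ = (l₁ ++ [a]) ++ (b :: l₂) by simp,
    List.dropLast_append_of_ne_nil (by simp)]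
  simp

theorem EdgeOn.append_right (h : EdgeOn a b p) (t : List V) : EdgeOn a b (p ++ t) := by
  obtain ⟨l₁, l₂, rfl⟩ := edgeOn_iff.mp h
  exact edgeOn_iff.mpr ⟨l₁, l₂ ++ t, by simp⟩

theorem IsWalk.mono (hsub : ∀ a b, H a b → G a b) (h : IsWalk H u v p) : IsWalk G u v p :=
  ⟨h.1.imp hsub, h.2.1, h.2.2⟩

theorem IsWalk.prefix_split {l₁ l₂ : List V} {v' : V} (h : IsWalk G s v (l₁ ++ v' :: l₂)) :
    IsWalk G s v' (l₁ ++ [v']) := by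
  obtain ⟨hc, hh, -⟩ := h
  refine ⟨hc.prefix ⟨l₂, by simp⟩, ?_, List.getLast?_concat⟩
  rw [show (l₁ ++ [v']).head? = (l₁ ++ v' :: l₂).head? by cases l₁ <;> simp]
  exact hh

theorem IsWalk.suffix_split {l₁ l₂ : List V} {a b : V} (h : IsWalk G u v (l₁ ++ a :: b :: l₂)) :
    IsWalk G b v (b :: l₂) := by
  obtain ⟨hc, -, hl⟩ := h
  refine ⟨hc.suffix ⟨l₁ ++ [a], by simp⟩, rfl, ?_⟩
  rw [← hl, show l₁ ++ a :: b :: l₂ = (l₁ ++ [a]) ++ (b :: l₂) by simp,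
    List.getLast?_append_of_ne_nil _ (by simp)]

theorem IsWalk.append (h1 : IsWalk G u v p) (h2 : IsWalk G v w q) :
    IsWalk G u w (p ++ q.tail) := by
  obtain ⟨hc1, hh1, hl1⟩ := h1
  obtain ⟨hc2, hh2, hl2⟩ := h2
  cases q with
  | nil => simp at hh2
  | cons v0 t =>
    have hv0 : v0 = v := by simpa using hh2
    rw [hv0] at hc2 hl2
    cases t with
    | nil =>
      obtain rfl : v = w := by simpa using hl2
      simpa using ⟨hc1, hh1, hl1⟩
    | cons y t' =>
      rw [List.tail_cons]
      refine ⟨?_, ?_, ?_⟩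
      · show List.IsChain G (p ++ y :: t')
        rw [List.isChain_append]
        refine ⟨hc1, (List.isChain_cons_cons.mp hc2).2, ?_⟩
        intro c hc d hd
        have hcv : v = c := by rw [hl1] at hc; simpa using hc
        have hdy : y = d := by simpa using hd
        rw [← hcv, ← hdy]
        exact (List.isChain_cons_cons.mp hc2).1
      · cases p with
        | nil => simp at hh1
        | cons p0 p' => simpa using hh1
      · rw [List.getLast?_append_of_ne_nil _ (by simp)]
        simpa using hl2

theorem mem_first_split {v : V} {p : List V} (h : v ∈ p) :
    ∃ l₁ l₂, p = l₁ ++ v :: l₂ ∧ v ∉ l₁ := by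
  induction p with
  | nil => simp at h
  | cons x t ih =>
    by_cases hx : x = v
    · exact ⟨[], t, by simp [hx], by simp⟩
    · have hvt : v ∈ t := by
        rcases List.mem_cons.mp h with h | h
        · exact absurd h.symm hx
        · exact h
      obtain ⟨l₁, l₂, rfl, hnl⟩ := ih hvt
      exact ⟨x :: l₁, l₂, rfl, by simp [hnl]; exact fun hv => hx hv.symm⟩

end Test

section Main

variable {G : V → V → Prop} {s u w : V}

theorem dom_antisymm (hne : u ≠ w) (h1 : Dom G s u w) (h2 : Dom G s w u)
    (hr : Reach G s u) : False := by
  obtain ⟨p, hp⟩ := hr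
  have key : ∀ n, ∀ p : List V, p.length ≤ n → IsWalk G s u p → False := by
    intro n
    induction n with
    | zero =>
      intro p hl hw
      obtain rfl : p = [] := List.length_eq_zero_iff.mp (Nat.le_zero.mp hl)
      simp [IsWalk] at hw
    | succ n ih =>
      intro p hl hw
      obtain ⟨l₁, l₂, rfl⟩ := List.append_of_mem (h2 p hw)
      have hw1 : IsWalk G s w (l₁ ++ [w]) := hw.prefix_split
      have hu1 : u ∈ l₁ := by
        rcases List.mem_append.mp (h1 _ hw1) with h | h
        · exact h
        · simp at h; exact absurd h hne
      obtain ⟨m₁, m₂, rfl⟩ := List.append_of_mem hu1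
      have hw2 : IsWalk G s u (m₁ ++ [u]) := by
        rw [show (m₁ ++ u :: m₂) ++ w :: l₂ = m₁ ++ u :: (m₂ ++ w :: l₂) by simp] at hw
        exact hw.prefix_split
      refine ih _ ?_ hw2
      simp [List.length_append] at hl ⊢
      omega
  exact key p.length p le_rfl hp

theorem key_lemma {r x y a b dr : V}
    (hdrr : IsBridge G s dr r) (hry : Dom G s r y)
    (hq : ∃ q, IsWalk G s b q ∧ r ∉ q)
    (hno : ¬ Reach (DelEdge G a b) x y) :
    ¬ Reach (DelEdge G dr r) x y := by
  rintro ⟨P, hP⟩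
  have hHsub : ∀ c d, DelEdge G dr r c d → G c d := fun c d h => h.1
  have hab : EdgeOn a b P := by
    by_contra hne
    refine hno ⟨P, chain'_iff_edgeOn.mpr fun c d hcd =>
      ⟨(chain'_iff_edgeOn.mp hP.1 c d hcd).1, ?_⟩, hP.2.1, hP.2.2⟩
    rintro ⟨rfl, rfl⟩
    exact hne hcd
  obtain ⟨l₁, l₂, rfl⟩ := edgeOn_iff.mp hab
  have hsuf : IsWalk (DelEdge G dr r) b y (b :: l₂) := hP.suffix_split
  obtain ⟨Q, hQ, hrQ⟩ := hq
  have hQH : IsWalk (DelEdge G dr r) s b Q := by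
    refine ⟨chain'_iff_edgeOn.mpr fun c d hcd => ⟨chain'_iff_edgeOn.mp hQ.1 c d hcd, ?_⟩,
      hQ.2.1, hQ.2.2⟩
    rintro ⟨rfl, rfl⟩
    exact hrQ hcd.mem_snd
  have hR : IsWalk (DelEdge G dr r) s y (Q ++ l₂) := hQH.append hsuf
  obtain ⟨m₁, m₂, hm⟩ := List.append_of_mem (hry _ (hR.mono hHsub))
  have hpre : IsWalk G s r (m₁ ++ [r]) := by
    rw [hm] at hR
    exact (hR.mono hHsub).prefix_split
  have hedge : EdgeOn dr r (Q ++ l₂) := by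
    have h := (hdrr.2 _ hpre).append_right m₂
    rwa [show (m₁ ++ [r]) ++ m₂ = Q ++ l₂ by rw [hm]; simp] at h
  exact (chain'_iff_edgeOn.mp hR.1 dr r hedge).2 ⟨rfl, rfl⟩

end Main

/-- If `x, y` lie in the same tree of the bridge decomposition of `D`, with root
`r ≠ s`, and a bridge `(a,b)` of `G_s` that is not a descendant of `r` in `D`
separates `x` and `y`, then the bridge `(d(r), r)` also separates `x` and `y`. -/
theorem stmt11 (G : V → V → Prop) (hG : StronglyConnected G) (s r x y : V)
    (hrs : r ≠ s)
    (hrx : IsBDRoot G s r x) (hry : IsBDRoot G s r y)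
    (a b : V) (hbr : IsBridge G s a b) (hnd : ¬ Dom G s r b)
    (hsep : ¬ SConn (DelEdge G a b) x y)
    (dr : V) (hdr : Idom G s dr r) :
    ¬ SConn (DelEdge G dr r) x y := by
  obtain ⟨a', ha'⟩ : IsBridgeHead G s r := hrx.2.1.resolve_left hrs
  have ha'r : a' ≠ r := by
    rintro rfl
    obtain ⟨p, hp⟩ := hG s a'
    obtain ⟨l₁, l₂, rfl, hnl⟩ := mem_first_split (List.mem_of_getLast? hp.2.2)
    have h := (ha'.2 _ hp.prefix_split).fst_mem_dropLast
    rw [List.dropLast_concat] at h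
    exact hnl h
  have hdoma' : Dom G s a' r := fun p hp => (ha'.2 p hp).mem_fst
  have h1 : Dom G s a' dr := hdr.2.2 a' ha'r hdoma'
  have h2 : Dom G s dr a' := by
    intro p hp
    have hwr : IsWalk G a' r [a', r] := ⟨by simp [List.Chain', ha'.1], rfl, rfl⟩
    have h := hdr.2.1 _ (hp.append hwr)
    rcases List.mem_append.mp h with h | h
    · exact h
    · simp at h; exact absurd h hdr.1
  obtain rfl : a' = dr := by
    by_contra hne
    exact dom_antisymm hne h1 h2 (hG s a')
  rw [Dom] at hnd
  push_neg at hnd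
  intro hcon
  rcases not_and_or.mp hsep with hno | hno
  · exact key_lemma ha' hry.1 hnd hno hcon.1
  · exact key_lemma ha' hrx.1 hnd hno hcon.2

end StrongConn
end
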